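/- Additive decomposition into N subproblems: Let i₁, …, i_N, D be nonnegative integers, A a positive integer, and i = Σ_{n=1}^N i_n. Define recursively Δ̃₀ = 0 and (j_n, Δ̃_n) = ds(i_n, D, A, κ_n, Δ̃_{n−1}) for n = 1, …, N, where ds is the direct-search algorithm with correction term. Then j = Σ_{n=1}^N j_n minimizes |k·A − i·D| over all integers k, and Δ̃_N = j·A − i·D. -/

import Mathlib

/-- Direct-search algorithm with correction term `Δm`. -/
def ds (i D A k₀ Δm : ℤ) : ℤ × ℤ :=
  let Δ₀ := k₀ * A - i * D + Δm
  if Δ₀ = 0 then (k₀, 0)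
  else if 0 < Δ₀ then
    let k₁ := k₀ - Δ₀ / A
    let Δ₁ := Δ₀ % A
    if |Δ₁ - A| < |Δ₁| then (k₁ - 1, Δ₁ - A) else (k₁, Δ₁)
  else
    let k₁ := k₀ + |Δ₀| / A
    let Δ₁ := -(|Δ₀| % A)
    if |Δ₁ + A| < |Δ₁| then (k₁ + 1, Δ₁ + A) else (k₁, Δ₁)

lemma ds_spec (i D A κ Δ : ℤ) (hA : 0 < A) :
    (ds i D A κ Δ).2 = (ds i D A κ Δ).1 * A - i * D + Δ ∧
    2 * |(ds i D A κ Δ).2| ≤ A := by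
  unfold ds
  set Δ₀ := κ * A - i * D + Δ with hΔ₀
  have hAne : A ≠ 0 := ne_of_gt hA
  by_cases h0 : Δ₀ = 0
  · simp only [h0, if_pos rfl]
    constructor
    · simp; linarith [hΔ₀ ▸ h0]
    · simp; linarith
  · simp only [if_neg h0]
    by_cases hpos : 0 < Δ₀
    · simp only [if_pos hpos]
      have hmod : Δ₀ % A = Δ₀ - A * (Δ₀ / A) := Int.emod_def Δ₀ A
      have h1 : 0 ≤ Δ₀ % A := Int.emod_nonneg Δ₀ hAne
      have h2 : Δ₀ % A < A := Int.emod_lt_of_pos Δ₀ hA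
      by_cases hc : |Δ₀ % A - A| < |Δ₀ % A|
      · simp only [if_pos hc]
        constructor
        · rw [hmod] at *
          ring_nf
          linear_combination hΔ₀
        · rw [abs_of_nonpos (by linarith)]
          rw [abs_of_nonneg h1, abs_of_nonpos (by linarith)] at hc
          linarith
      · simp only [if_neg hc]
        constructor
        · rw [hmod]; ring_nf; linear_combination hΔ₀
        · rw [abs_of_nonneg h1]
          rw [abs_of_nonneg h1, abs_of_nonpos (by linarith)] at hc
          linarith [not_lt.mp hc]
    · simp only [if_neg hpos]
      have hneg : Δ₀ < 0 := lt_of_le_of_ne (not_lt.mp hpos) h0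
      have habs : |Δ₀| = -Δ₀ := abs_of_neg hneg
      have hmod : |Δ₀| % A = |Δ₀| - A * (|Δ₀| / A) := Int.emod_def _ A
      have h1 : 0 ≤ |Δ₀| % A := Int.emod_nonneg _ hAne
      have h2 : |Δ₀| % A < A := Int.emod_lt_of_pos _ hA
      by_cases hc : |-(|Δ₀| % A) + A| < |-(|Δ₀| % A)|
      · simp only [if_pos hc]
        constructor
        · rw [hmod, habs] at *
          ring_nf
          linear_combination hΔ₀
        · rw [abs_of_nonneg (by linarith)]
          rw [abs_of_nonneg (by linarith), abs_neg, abs_of_nonneg h1] at hc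
          linarith
      · simp only [if_neg hc]
        constructor
        · rw [hmod, habs]; ring_nf; linear_combination hΔ₀
        · rw [abs_neg, abs_of_nonneg h1]
          rw [abs_of_nonneg (by linarith), abs_neg, abs_of_nonneg h1] at hc
          linarith [not_lt.mp hc]

lemma min_abs_of_half (A r : ℤ) (hA : 0 < A) (hr : 2 * |r| ≤ A) (m : ℤ) :
    |r| ≤ |r + m * A| := by
  rcases eq_or_ne m 0 with rfl | hm
  · simp
  · have h1 : |m * A| ≤ |r + m * A| + |r| := by
      have := abs_add_le (r + m * A) (-r)
      simpa using this
    have h2 : A ≤ |m * A| := by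
      rw [abs_mul, abs_of_pos hA]
      nlinarith [Int.one_le_abs hm]
    linarith

theorem stmt_11 (N : ℕ) (hN : 1 ≤ N) (i κ j : ℕ → ℤ) (D A : ℤ)
    (hi : ∀ n, 0 ≤ i n) (hD : 0 ≤ D) (hA : 0 < A)
    (Δtil : ℕ → ℤ) (hΔtil0 : Δtil 0 = 0)
    (hstep : ∀ n < N, (j n, Δtil (n + 1)) = ds (i n) D A (κ n) (Δtil n)) :
    (∀ k : ℤ, |(∑ n ∈ Finset.range N, j n) * A - (∑ n ∈ Finset.range N, i n) * D| ≤
      |k * A - (∑ n ∈ Finset.range N, i n) * D|) ∧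
    Δtil N = (∑ n ∈ Finset.range N, j n) * A - (∑ n ∈ Finset.range N, i n) * D := by
  have hsum : ∀ n, n ≤ N →
      Δtil n = (∑ m ∈ Finset.range n, j m) * A - (∑ m ∈ Finset.range n, i m) * D := by
    intro n
    induction n with
    | zero => intro _; simpa using hΔtil0
    | succ n ih =>
      intro hn
      have hlt : n < N := hn
      have hs := hstep n hlt
      have hj : j n = (ds (i n) D A (κ n) (Δtil n)).1 := by rw [← hs]
      have hΔ : Δtil (n + 1) = (ds (i n) D A (κ n) (Δtil n)).2 := by rw [← hs]
      have := (ds_spec (i n) D A (κ n) (Δtil n) hA).1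
      rw [hΔ, this, ← hj, ih (le_of_lt hlt)]
      rw [Finset.sum_range_succ, Finset.sum_range_succ]
      ring
  have hmain := hsum N le_rfl
  refine ⟨fun k => ?_, hmain⟩
  -- bound on |Δtil N|
  obtain ⟨M, rfl⟩ : ∃ M, N = M + 1 := ⟨N - 1, by omega⟩
  have hs := hstep M (by omega)
  have hΔ : Δtil (M + 1) = (ds (i M) D A (κ M) (Δtil M)).2 := by rw [← hs]
  have hbd : 2 * |Δtil (M + 1)| ≤ A := by
    rw [hΔ]; exact (ds_spec (i M) D A (κ M) (Δtil M) hA).2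
  have key := min_abs_of_half A (Δtil (M + 1)) hA hbd
    (k - ∑ n ∈ Finset.range (M + 1), j n)
  rw [hmain] at key
  have heq : (∑ n ∈ Finset.range (M + 1), j n) * A -
      (∑ n ∈ Finset.range (M + 1), i n) * D +
      (k - ∑ n ∈ Finset.range (M + 1), j n) * A =
      k * A - (∑ n ∈ Finset.range (M + 1), i n) * D := by ring
  rw [heq] at key
  exact key
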